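/- Let g, Ric : ℝ → Matrix (Fin n) (Fin n) ℝ with g differentiable, det g(t) > 0 for all t, and suppose g satisfies the Ricci flow equation g'(t) = −2 · Ric(t) for all t. Then the derivative at t of the function t ↦ Real.log (Real.sqrt (det g(t))) equals − trace((g(t))⁻¹ * Ric(t)); that is, d/dt log √g = −R, where R is the scalar curvature trace(g⁻¹ Ric). -/

import Mathlib

open Matrix Finset

/-- Expansion of the determinant of a row update in terms of the adjugate. -/
lemma det_updateRow_eq_sum_adj {n : ℕ} (A : Matrix (Fin n) (Fin n) ℝ) (i : Fin n)
    (b : Fin n → ℝ) :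
    (A.updateRow i b).det = ∑ j, Matrix.adjugate A j i * b j := by
  rw [← Matrix.cramer_transpose_apply, Matrix.cramer_eq_adjugate_mulVec, Matrix.mulVec,
    ← Matrix.adjugate_transpose]
  simp [dotProduct, Matrix.transpose_apply]

/-- Jacobi's formula for a curve of matrices. -/
lemma hasDerivAt_det_curve {n : ℕ} (g : ℝ → Matrix (Fin n) (Fin n) ℝ)
    (B : Matrix (Fin n) (Fin n) ℝ) (t : ℝ)
    (h : ∀ i j, HasDerivAt (fun s => g s i j) (B i j) t) :
    HasDerivAt (fun s => (g s).det) (Matrix.trace (Matrix.adjugate (g t) * B)) t := by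
  set A := g t with hA
  have step : HasDerivAt (fun s => (g s).det)
      (∑ σ : Equiv.Perm (Fin n), ((Equiv.Perm.sign σ : ℤ) : ℝ) *
        ∑ i, (∏ j ∈ univ.erase i, A (σ j) j) * B (σ i) i) t := by
    have : HasDerivAt (fun s => ∑ σ : Equiv.Perm (Fin n),
        ((Equiv.Perm.sign σ : ℤ) : ℝ) * ∏ i, g s (σ i) i)
        (∑ σ : Equiv.Perm (Fin n), ((Equiv.Perm.sign σ : ℤ) : ℝ) *
          ∑ i, (∏ j ∈ univ.erase i, A (σ j) j) * B (σ i) i) t := by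
      refine HasDerivAt.fun_sum fun σ _ => ?_
      have hp : HasDerivAt (fun s => ∏ i, g s (σ i) i)
          (∑ i, (∏ j ∈ univ.erase i, g t (σ j) j) • B (σ i) i) t :=
        HasDerivAt.fun_finsetProd fun i _ => h (σ i) i
      simpa [smul_eq_mul, hA] using hp.const_mul (((Equiv.Perm.sign σ : ℤ) : ℝ))
    convert this using 2 with s
    · exact Matrix.det_apply' _
  convert step using 1
  -- algebraic identity
  have key : ∀ σ : Equiv.Perm (Fin n),
      ∑ i, ((Equiv.Perm.sign σ : ℤ) : ℝ) * ∏ j, (A.updateRow i (B i)) (σ j) j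
      = ∑ i, ((Equiv.Perm.sign σ : ℤ) : ℝ) *
        ((∏ j ∈ univ.erase i, A (σ j) j) * B (σ i) i) := by
    intro σ
    refine (Fintype.sum_equiv σ _ _ fun i => ?_).symm
    congr 1
    rw [← Finset.mul_prod_erase _ _ (Finset.mem_univ i), Matrix.updateRow_self, mul_comm]
    congr 1
    refine Finset.prod_congr rfl fun j hj => ?_
    have : σ j ≠ σ i := fun hc => (Finset.mem_erase.mp hj).1 (σ.injective hc)
    rw [Matrix.updateRow_ne this]
  have lhs_eq : Matrix.trace (Matrix.adjugate A * B)
      = ∑ i, (A.updateRow i (B i)).det := by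
    simp only [det_updateRow_eq_sum_adj, Matrix.trace, Matrix.diag, Matrix.mul_apply]
    rw [Finset.sum_comm]
  rw [lhs_eq]
  simp only [Matrix.det_apply', Finset.mul_sum]
  rw [Finset.sum_comm]
  exact Finset.sum_congr rfl fun σ _ => key σ

/-- Under the Ricci flow `g' = −2 Ric`, the derivative of `log √(det g)` equals
`−trace (g⁻¹ Ric) = −R`, the negative of the scalar curvature. -/
theorem deriv_log_sqrt_det_ricci_flow (n : ℕ)
    (g Ric : ℝ → Matrix (Fin n) (Fin n) ℝ)
    (hg : ∀ i j : Fin n, Differentiable ℝ (fun t => g t i j))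
    (hdet : ∀ t : ℝ, 0 < (g t).det)
    (hflow : ∀ (t : ℝ) (i j : Fin n), deriv (fun s => g s i j) t = -2 * Ric t i j)
    (t : ℝ) :
    deriv (fun s => Real.log (Real.sqrt (g s).det)) t
      = -Matrix.trace ((g t)⁻¹ * Ric t) := by
  have hA : (g t).det ≠ 0 := (hdet t).ne'
  set B : Matrix (Fin n) (Fin n) ℝ := (-2 : ℝ) • Ric t with hB
  have hent : ∀ i j, HasDerivAt (fun s => g s i j) (B i j) t := by
    intro i j
    have := ((hg i j) t).hasDerivAt
    rwa [hflow t i j, show (-2 : ℝ) * Ric t i j = B i j by simp [hB]] at this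
  have hdetD := hasDerivAt_det_curve g B t hent
  have hlog : HasDerivAt (fun s => Real.log ((g s).det))
      (((g t).det)⁻¹ * Matrix.trace (Matrix.adjugate (g t) * B)) t := by
    simpa [mul_comm, Function.comp_def] using (Real.hasDerivAt_log hA).comp t hdetD
  have hfun : (fun s => Real.log (Real.sqrt (g s).det))
      = fun s => Real.log ((g s).det) / 2 := by
    funext s; rw [Real.log_sqrt (hdet s).le]
  rw [hfun, deriv_div_const, hlog.deriv]
  have hinv : Matrix.trace ((g t)⁻¹ * Ric t)
      = ((g t).det)⁻¹ * Matrix.trace (Matrix.adjugate (g t) * Ric t) := by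
    rw [Matrix.inv_def, Ring.inverse_eq_inv', Matrix.smul_mul, Matrix.trace_smul, smul_eq_mul]
  have hBtr : Matrix.trace (Matrix.adjugate (g t) * B)
      = -2 * Matrix.trace (Matrix.adjugate (g t) * Ric t) := by
    rw [hB, Matrix.mul_smul, Matrix.trace_smul, smul_eq_mul]
  rw [hBtr, hinv]
  ring
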